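/- Let n ≥ 3 and 2 ≤ a ≤ n−1. Then the number of permutations σ of [n] with empty peak set satisfying σ(1) = n > σ(2) and σ(n−1) < σ(n) = a equals 2^{a−2}, and it also equals the number of permutations σ of [n] with empty peak set satisfying σ(1) = a > σ(2) and σ(n−1) < σ(n) = n. -/

import Mathlib

/-- `i` (1-based, with `1 < i < n`) is a peak of the permutation `σ` of `{1,…,n}`
(represented as a permutation of `Fin n`, position `j` (1-based) being index `j-1`). -/
def IsPeak {n : ℕ} (σ : Equiv.Perm (Fin n)) (i : ℕ) : Prop :=
  ∃ (h₂ : 2 ≤ i) (h₃ : i < n),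
    σ ⟨i - 2, by omega⟩ < σ ⟨i - 1, by omega⟩ ∧ σ ⟨i, h₃⟩ < σ ⟨i - 1, by omega⟩

open Classical in
/-- The peak set of a permutation of `{1,…,n}` (as a set of 1-based positions). -/
noncomputable def peakSet {n : ℕ} (σ : Equiv.Perm (Fin n)) : Finset ℕ :=
  (Finset.range n).filter (fun i => IsPeak σ i)

/-- `P(S;n)`: the number of permutations of `{1,…,n}` with peak set `S`. -/
noncomputable def numPeakSet (n : ℕ) (S : Finset ℕ) : ℕ :=
  Nat.card {σ : Equiv.Perm (Fin n) // peakSet σ = S}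

/-- `c` is a composition of `n`: a list of positive integers summing to `n`. -/
def IsComposition (n : ℕ) (c : List ℕ) : Prop :=
  (∀ x ∈ c, 0 < x) ∧ c.sum = n

/-- The set `S(c)` of proper partial sums of the composition `c`. -/
def compPeaks (c : List ℕ) : Finset ℕ :=
  (Finset.range (c.length - 1)).image (fun i => (c.take (i + 1)).sum)

/-- `P(c)`: the number of permutations of `{1,…,|c|}` whose peak set is `S(c)`. -/
noncomputable def Pcomp (c : List ℕ) : ℕ :=
  numPeakSet c.sum (compPeaks c)

/-- A composition is maximal if `P(b) ≤ P(c)` for every composition `b` of the same size. -/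
def IsMaximal (c : List ℕ) : Prop :=
  ∀ b : List ℕ, IsComposition c.sum b → Pcomp b ≤ Pcomp c

set_option maxHeartbeats 1600000

namespace IC

variable {n : ℕ} {σ : Equiv.Perm (Fin n)}

def vfun (D : Finset (Fin n)) : Fin n → Fin n := fun i =>
  if h : (i : ℕ) < D.card then
    D.orderEmbOfFin rfl ⟨D.card - 1 - i, by omega⟩
  else
    Dᶜ.orderEmbOfFin (by rw [Finset.card_compl, Fintype.card_fin])
      ⟨(i : ℕ) - D.card, by have := i.2; omega⟩

lemma vfun_mem_left {D : Finset (Fin n)} {i : Fin n} (h : (i : ℕ) < D.card) :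
    vfun D i ∈ D := by
  rw [vfun, dif_pos h]; exact Finset.orderEmbOfFin_mem _ _ _

lemma vfun_mem_right {D : Finset (Fin n)} {i : Fin n} (h : ¬ (i : ℕ) < D.card) :
    vfun D i ∈ Dᶜ := by
  rw [vfun, dif_neg h]; exact Finset.orderEmbOfFin_mem _ _ _

lemma vfun_desc {D : Finset (Fin n)} {i j : Fin n} (hij : (i : ℕ) < j)
    (hj : (j : ℕ) < D.card) : vfun D j < vfun D i := by
  have hi : (i : ℕ) < D.card := by omega
  simp only [vfun]
  rw [dif_pos hi, dif_pos hj]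
  exact (D.orderEmbOfFin rfl).strictMono (by simp [Fin.lt_def]; omega)

lemma vfun_asc {D : Finset (Fin n)} {i j : Fin n} (hi : ¬ (i : ℕ) < D.card)
    (hij : (i : ℕ) < j) : vfun D i < vfun D j := by
  have hj : ¬ (j : ℕ) < D.card := by omega
  simp only [vfun]
  rw [dif_neg hi, dif_neg hj]
  exact (Dᶜ.orderEmbOfFin _).strictMono (by simp [Fin.lt_def]; omega)

lemma vfun_inj (D : Finset (Fin n)) : Function.Injective (vfun D) := by
  intro i j h
  by_contra hne
  rcases Ne.lt_or_gt (fun hv : i = j => hne hv) with hlt | hlt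
  · have hlt' : (i : ℕ) < j := hlt
    by_cases hj : (j : ℕ) < D.card
    · exact absurd h (ne_of_gt (vfun_desc hlt' hj))
    · by_cases hi : (i : ℕ) < D.card
      · have h1 := vfun_mem_left hi
        rw [h] at h1
        exact (Finset.mem_compl.mp (vfun_mem_right hj)) h1
      · exact absurd h (ne_of_lt (vfun_asc hi hlt'))
  · have hlt' : (j : ℕ) < i := hlt
    by_cases hi : (i : ℕ) < D.card
    · exact absurd h.symm (ne_of_gt (vfun_desc hlt' hi))
    · by_cases hj : (j : ℕ) < D.card
      · have h1 := vfun_mem_left hj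
        rw [← h] at h1
        exact (Finset.mem_compl.mp (vfun_mem_right hi)) h1
      · exact absurd h.symm (ne_of_lt (vfun_asc hj hlt'))

noncomputable def vperm (D : Finset (Fin n)) : Equiv.Perm (Fin n) :=
  Equiv.ofBijective (vfun D) (Finite.injective_iff_bijective.mp (vfun_inj D))

@[simp] lemma vperm_apply (D : Finset (Fin n)) (i : Fin n) : vperm D i = vfun D i := rfl

lemma vperm_peakSet (D : Finset (Fin n)) : peakSet (vperm D) = ∅ := by
  classical
  rw [peakSet, Finset.filter_eq_empty_iff]
  rintro i - ⟨h₂, h₃, hab, hcb⟩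
  simp only [vperm_apply] at hab hcb
  by_cases h : (i - 1 : ℕ) < D.card
  · have : vfun D ⟨i - 1, by omega⟩ < vfun D ⟨i - 2, by omega⟩ :=
      vfun_desc (by simp; omega) (by simpa using h)
    exact absurd hab (not_lt_of_gt this)
  · have : vfun D ⟨i - 1, by omega⟩ < vfun D ⟨i, h₃⟩ :=
      vfun_asc (by simpa using h) (by simp; omega)
    exact absurd hcb (not_lt_of_gt this)


lemma nopk (hσ : peakSet σ = ∅) {p : ℕ} (h : p + 2 < n) :
    ¬ (σ ⟨p, by omega⟩ < σ ⟨p+1, by omega⟩ ∧ σ ⟨p+2, h⟩ < σ ⟨p+1, by omega⟩) := by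
  classical
  rw [peakSet, Finset.filter_eq_empty_iff] at hσ
  intro hc
  exact hσ (Finset.mem_range.mpr h) ⟨by omega, h, hc.1, hc.2⟩

lemma step (hσ : peakSet σ = ∅) {p : ℕ} (h : p + 2 < n)
    (h1 : σ ⟨p, by omega⟩ < σ ⟨p+1, by omega⟩) : σ ⟨p+1, by omega⟩ < σ ⟨p+2, h⟩ := by
  have hno := nopk hσ h
  have hne : σ ⟨p+1, by omega⟩ ≠ σ ⟨p+2, h⟩ := by
    intro he
    have := σ.injective he
    simp [Fin.ext_iff] at this
  rcases lt_or_gt_of_ne hne with h' | h'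
  · exact h'
  · exact absurd ⟨h1, h'⟩ hno

lemma inc_prop (hσ : peakSet σ = ∅) {p : ℕ} (h1 : p + 1 < n)
    (hp : σ ⟨p, by omega⟩ < σ ⟨p+1, h1⟩) :
    ∀ d (hd : p + d + 1 < n),
      σ ⟨p + d, Nat.lt_of_succ_lt hd⟩ < σ ⟨p + d + 1, hd⟩ := by
  intro d
  induction d with
  | zero => intro hd; exact hp
  | succ d ih =>
    intro hd
    have hd' : p + d + 1 < n := by omega
    exact step hσ (p := p + d) (by omega) (ih hd')

lemma mono_from (hσ : peakSet σ = ∅) {p : ℕ} (h1 : p + 1 < n)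
    (hp : σ ⟨p, by omega⟩ < σ ⟨p+1, h1⟩) :
    ∀ q r (hr : r < n) (hpq : p ≤ q) (hqr : q < r),
      σ ⟨q, by omega⟩ < σ ⟨r, hr⟩ := by
  intro q r hr hpq hqr
  induction r, hqr using Nat.le_induction with
  | base =>
    have := inc_prop hσ h1 hp (q - p) (by omega)
    simpa only [show p + (q - p) = q from by omega] using this
  | succ r hqr ih =>
    have hr' : r < n := by omega
    have h2 := inc_prop hσ h1 hp (r - p) (by omega)
    simp only [show p + (r - p) = r from by omega] at h2
    exact lt_trans (ih hr') h2

section WithM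

variable (hn : 0 < n)

/-- `m`: the position of the minimum value. -/
def mval (hn : 0 < n) (σ : Equiv.Perm (Fin n)) : ℕ := (σ.symm ⟨0, hn⟩ : ℕ)

lemma mval_lt : mval hn σ < n := (σ.symm ⟨0, hn⟩).2

lemma sigma_mval : σ ⟨mval hn σ, mval_lt hn⟩ = ⟨0, hn⟩ := by
  have : (⟨mval hn σ, mval_lt hn⟩ : Fin n) = σ.symm ⟨0, hn⟩ := Fin.ext rfl
  rw [this, Equiv.apply_symm_apply]

lemma dec_adj (hσ : peakSet σ = ∅) {p : ℕ} (hp : p + 1 ≤ mval hn σ) :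
    σ ⟨p+1, by have := mval_lt hn (σ := σ); omega⟩ <
      σ ⟨p, by have := mval_lt hn (σ := σ); omega⟩ := by
  have hmn := mval_lt hn (σ := σ)
  by_contra hc
  push_neg at hc
  have hne : σ ⟨p, by omega⟩ ≠ σ ⟨p+1, by omega⟩ := by
    intro he; have := σ.injective he; simp [Fin.ext_iff] at this
  have hlt : σ ⟨p, by omega⟩ < σ ⟨p+1, by omega⟩ := lt_of_le_of_ne hc hne
  have := mono_from hσ (p := p) (by omega) hlt p (mval hn σ) (by omega) le_rfl (by omega)
  rw [sigma_mval] at this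
  exact absurd this (by simp [Fin.lt_def])

lemma dec_chain (hσ : peakSet σ = ∅) {p q : ℕ} (hpq : p < q) (hq : q ≤ mval hn σ) :
    σ ⟨q, by have := mval_lt hn (σ := σ); omega⟩ <
      σ ⟨p, by have := mval_lt hn (σ := σ); omega⟩ := by
  have hmn := mval_lt hn (σ := σ)
  induction q, hpq using Nat.le_induction with
  | base => exact dec_adj hn hσ hq
  | succ q hq' ih =>
    exact lt_trans (dec_adj hn hσ (p := q) hq) (ih (by omega))

lemma asc_adj (hσ : peakSet σ = ∅) {p : ℕ} (hmp : mval hn σ ≤ p) (hp : p + 1 < n) :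
    σ ⟨p, by omega⟩ < σ ⟨p+1, hp⟩ := by
  have hmn := mval_lt hn (σ := σ)
  have base : ∀ (h : mval hn σ + 1 < n),
      σ ⟨mval hn σ, by omega⟩ < σ ⟨mval hn σ + 1, h⟩ := by
    intro h
    rw [sigma_mval]
    have hne : σ ⟨mval hn σ + 1, h⟩ ≠ ⟨0, hn⟩ := by
      intro he
      rw [← sigma_mval hn] at he
      have := σ.injective he
      simp [Fin.ext_iff] at this
    have hv : (σ ⟨mval hn σ + 1, h⟩ : ℕ) ≠ 0 := by
      intro h0; exact hne (Fin.ext h0)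
    exact Nat.pos_of_ne_zero hv
  rcases Nat.eq_or_lt_of_le hmp with he | hlt
  · subst he; exact base hp
  · exact mono_from hσ (p := mval hn σ) (by omega) (base (by omega)) p (p+1) hp
      (by omega) (by omega)

lemma asc_chain (hσ : peakSet σ = ∅) {p q : ℕ} (hmp : mval hn σ ≤ p) (hpq : p < q)
    (hq : q < n) : σ ⟨p, by omega⟩ < σ ⟨q, hq⟩ := by
  have h1 : p + 1 < n := by omega
  exact mono_from hσ (p := p) h1 (asc_adj hn hσ hmp h1) p q hq le_rfl hpq


lemma getElem_congr' {α : Type*} (l : List α) {i j : ℕ} (h : i = j) (hi : i < l.length) :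
    l[i]'hi = l[j]'(h ▸ hi) := by subst h; rfl

noncomputable def Dof (hn : 0 < n) (σ : Equiv.Perm (Fin n)) : Finset (Fin n) :=
  (Finset.Iic (σ.symm ⟨0, hn⟩)).image σ

lemma mem_Dof {v : Fin n} : v ∈ Dof hn σ ↔ (σ.symm v : ℕ) ≤ mval hn σ := by
  constructor
  · intro hv
    rw [Dof, Finset.mem_image] at hv
    obtain ⟨i, hi, rfl⟩ := hv
    rw [Equiv.symm_apply_apply]
    exact Fin.le_def.mp (Finset.mem_Iic.mp hi)
  · intro hv
    rw [Dof, Finset.mem_image]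
    refine ⟨σ.symm v, Finset.mem_Iic.mpr (Fin.le_def.mpr hv), by simp⟩

lemma card_Dof : (Dof hn σ).card = mval hn σ + 1 := by
  rw [Dof, Finset.card_image_of_injective _ σ.injective, Fin.card_Iic]
  rfl

lemma sigma_eq_vperm (hσ : peakSet σ = ∅) : σ = vperm (Dof hn σ) := by
  have hmn : mval hn σ < n := mval_lt hn
  set m := mval hn σ with hm
  have hcard : (Dof hn σ).card = m + 1 := card_Dof hn
  have hg : (fun i : Fin (m+1) => σ ⟨m - (i : ℕ), by omega⟩)
      = ⇑((Dof hn σ).orderEmbOfFin hcard) := by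
    apply Finset.orderEmbOfFin_unique
    · intro x
      rw [mem_Dof hn, Equiv.symm_apply_apply]
      show m - (x : ℕ) ≤ m
      omega
    · intro i j hij
      have hj : (j : ℕ) ≤ m := by omega
      exact dec_chain hn hσ (p := m - (j : ℕ)) (q := m - (i : ℕ))
        (by omega) (by omega)
  have hcc : (Dof hn σ)ᶜ.card = n - (m+1) := by
    rw [Finset.card_compl, Fintype.card_fin, hcard]
  have hh : (fun i : Fin (n - (m+1)) => σ ⟨m + 1 + (i : ℕ), by omega⟩)
      = ⇑((Dof hn σ)ᶜ.orderEmbOfFin hcc) := by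
    apply Finset.orderEmbOfFin_unique
    · intro x
      rw [Finset.mem_compl, mem_Dof hn, Equiv.symm_apply_apply]
      show ¬ (m + 1 + (x : ℕ) ≤ m)
      omega
    · intro i j hij
      exact asc_chain hn hσ (p := m + 1 + (i : ℕ)) (q := m + 1 + (j : ℕ))
        (by omega) (by omega) (by omega)
  apply Equiv.ext; intro i
  rw [vperm_apply]
  by_cases hi : (i : ℕ) < (Dof hn σ).card
  · have hi' : (i : ℕ) ≤ m := by omega
    have h2 := congrFun hg ⟨m - (i : ℕ), by omega⟩
    simp only at h2
    rw [Finset.orderEmbOfFin_apply] at h2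
    simp only [Fin.getElem_fin] at h2
    rw [vfun, dif_pos hi, Finset.orderEmbOfFin_apply]
    simp only [Fin.getElem_fin]
    have hieq : (⟨m - (m - (i : ℕ)), by omega⟩ : Fin n) = i := Fin.ext (by simp; omega)
    rw [hieq] at h2
    rw [getElem_congr' _ (show (Dof hn σ).card - 1 - (i : ℕ) = m - (i : ℕ) by omega)]
    exact h2
  · have hi' : m + 1 ≤ (i : ℕ) := by omega
    have hin : (i : ℕ) - (m + 1) < n - (m + 1) := by have := i.2; omega
    have h2 := congrFun hh ⟨(i : ℕ) - (m + 1), hin⟩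
    simp only at h2
    rw [Finset.orderEmbOfFin_apply] at h2
    simp only [Fin.getElem_fin] at h2
    rw [vfun, dif_neg hi, Finset.orderEmbOfFin_apply]
    simp only [Fin.getElem_fin]
    have hieq : (⟨m + 1 + ((i : ℕ) - (m + 1)), by omega⟩ : Fin n) = i :=
      Fin.ext (by simp; omega)
    rw [hieq] at h2
    rw [getElem_congr' _ (show (i : ℕ) - (Dof hn σ).card = (i : ℕ) - (m + 1) by omega)]
    exact h2


end WithM

lemma vperm_zero_val (D : Finset (Fin n)) (hD : 0 < D.card) :
    vperm D ⟨0, by have := Finset.card_le_univ D; simp at this; omega⟩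
      = D.max' (Finset.card_pos.mp hD) := by
  have hn' : 0 < n := by have := Finset.card_le_univ D; simp at this; omega
  rw [vperm_apply, vfun, dif_pos (show ((⟨0, hn'⟩ : Fin n) : ℕ) < D.card from hD)]
  have h := Finset.orderEmbOfFin_last (s := D) rfl hD
  convert h using 2
  simp

lemma vperm_last_val (D : Finset (Fin n)) (hD : D.card < n) (hn : 0 < n) :
    vperm D ⟨n - 1, by omega⟩
      = Dᶜ.max' (by
          rw [← Finset.card_pos, Finset.card_compl, Fintype.card_fin]; omega) := by
  rw [vperm_apply, vfun, dif_neg (show ¬ ((⟨n-1, by omega⟩ : Fin n) : ℕ) < D.card by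
    simp; omega)]
  have h := Finset.orderEmbOfFin_last (s := Dᶜ)
    (by rw [Finset.card_compl, Fintype.card_fin]) (k := n - D.card) (by omega)
  convert h using 2
  exact (by simp; omega)

lemma vperm_valley (D : Finset (Fin n)) (hn : 0 < n) (h0 : (⟨0, hn⟩ : Fin n) ∈ D) :
    vperm D ⟨D.card - 1, by
      have := Finset.card_le_univ D; simp at this
      have : 0 < D.card := Finset.card_pos.mpr ⟨_, h0⟩
      omega⟩ = ⟨0, hn⟩ := by
  have hc : 0 < D.card := Finset.card_pos.mpr ⟨_, h0⟩
  rw [vperm_apply, vfun, dif_pos (show D.card - 1 < D.card by omega)]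
  have h := Finset.orderEmbOfFin_zero (s := D) rfl hc
  have hmin : D.min' (Finset.card_pos.mp hc) = ⟨0, hn⟩ :=
    le_antisymm (Finset.min'_le _ _ h0) (Fin.le_def.mpr (Nat.zero_le _))
  rw [hmin] at h
  convert h using 2
  exact (by simp)

lemma mval_vperm (D : Finset (Fin n)) (hn : 0 < n) (h0 : (⟨0, hn⟩ : Fin n) ∈ D) :
    mval hn (vperm D) = D.card - 1 := by
  have := vperm_valley D hn h0
  have h2 := (Equiv.symm_apply_eq (vperm D)).mpr this.symm
  rw [mval, h2]

lemma Dof_vperm (D : Finset (Fin n)) (hn : 0 < n) (h0 : (⟨0, hn⟩ : Fin n) ∈ D) :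
    Dof hn (vperm D) = D := by
  have hc : 0 < D.card := Finset.card_pos.mpr ⟨_, h0⟩
  ext v
  rw [mem_Dof hn, mval_vperm D hn h0]
  constructor
  · intro hv
    have hlt : (((vperm D).symm v : Fin n) : ℕ) < D.card := by omega
    have := vfun_mem_left (D := D) (i := (vperm D).symm v) hlt
    rwa [← vperm_apply, Equiv.apply_symm_apply] at this
  · intro hv
    by_contra hc2
    push_neg at hc2
    have hge : ¬ (((vperm D).symm v : Fin n) : ℕ) < D.card := by omega
    have := vfun_mem_right (D := D) (i := (vperm D).symm v) hge
    rw [← vperm_apply, Equiv.apply_symm_apply, Finset.mem_compl] at this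
    exact this hv




section Main

variable {a : ℕ}

def C1 (hn : 2 < n) (ha₂ : 2 ≤ a) (han : a ≤ n - 1) (D : Finset (Fin n)) : Prop :=
  (⟨0, by omega⟩ : Fin n) ∈ D ∧ (⟨a - 1, by omega⟩ : Fin n) ∉ D ∧ ∀ v ∈ Dᶜ, (v : ℕ) < a

def C2 (hn : 2 < n) (ha₂ : 2 ≤ a) (han : a ≤ n - 1) (D : Finset (Fin n)) : Prop :=
  (⟨0, by omega⟩ : Fin n) ∈ D ∧ (⟨a - 1, by omega⟩ : Fin n) ∈ D ∧ ∀ v ∈ D, (v : ℕ) < a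

lemma C1_of (hn : 2 < n) (ha₂ : 2 ≤ a) (han : a ≤ n - 1) {σ : Equiv.Perm (Fin n)}
    (h0 : peakSet σ = ∅) (h1 : (σ ⟨0, by omega⟩ : ℕ) + 1 = n)
    (h4 : (σ ⟨n - 1, by omega⟩ : ℕ) + 1 = a) :
    C1 hn ha₂ han (Dof (by omega) σ) := by
  have hn0 : 0 < n := by omega
  have hmn : mval hn0 σ < n := mval_lt hn0
  refine ⟨?_, ?_, ?_⟩
  · rw [mem_Dof hn0]
    exact le_rfl
  · rw [mem_Dof hn0]
    have hs : σ ⟨n - 1, by omega⟩ = ⟨a - 1, by omega⟩ :=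
      Fin.ext (show (σ ⟨n - 1, by omega⟩ : ℕ) = a - 1 by omega)
    have hsy : σ.symm ⟨a - 1, by omega⟩ = ⟨n - 1, by omega⟩ :=
      (Equiv.symm_apply_eq σ).mpr hs.symm
    rw [hsy]
    intro hle
    have hme : mval hn0 σ = n - 1 := by
      have : (n : ℕ) - 1 ≤ mval hn0 σ := hle
      omega
    have hv := sigma_mval hn0 (σ := σ)
    rw [show (⟨mval hn0 σ, mval_lt hn0⟩ : Fin n) = ⟨n - 1, by omega⟩ from Fin.ext hme] at hv
    have hcontra : ((⟨0, hn0⟩ : Fin n) : ℕ) = ((⟨a - 1, by omega⟩ : Fin n) : ℕ) :=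
      congrArg Fin.val (hv.symm.trans hs)
    simp at hcontra
    omega
  · intro v hv
    rw [Finset.mem_compl, mem_Dof hn0] at hv
    push_neg at hv
    have hpn : ((σ.symm v : Fin n) : ℕ) < n := (σ.symm v).2
    have hveq : σ ⟨((σ.symm v : Fin n) : ℕ), hpn⟩ = v := by
      rw [show (⟨((σ.symm v : Fin n) : ℕ), hpn⟩ : Fin n) = σ.symm v from Fin.ext rfl,
        Equiv.apply_symm_apply]
    rcases eq_or_lt_of_le (Nat.le_sub_one_of_lt hpn) with he | hlt2
    · have hsy : σ.symm v = ⟨n - 1, by omega⟩ := Fin.ext he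
      have h5 : v = σ ⟨n - 1, by omega⟩ := (Equiv.symm_apply_eq σ).mp hsy
      rw [h5]
      omega
    · have := asc_chain hn0 h0 (p := ((σ.symm v : Fin n) : ℕ)) (q := n - 1)
        (by omega) (by omega) (by omega)
      rw [hveq] at this
      have hvv : (v : ℕ) < (σ ⟨n - 1, by omega⟩ : ℕ) := this
      omega

lemma C2_of (hn : 2 < n) (ha₂ : 2 ≤ a) (han : a ≤ n - 1) {σ : Equiv.Perm (Fin n)}
    (h0 : peakSet σ = ∅) (h1 : (σ ⟨0, by omega⟩ : ℕ) + 1 = a)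
    (h4 : (σ ⟨n - 1, by omega⟩ : ℕ) + 1 = n) :
    C2 hn ha₂ han (Dof (by omega) σ) := by
  have hn0 : 0 < n := by omega
  have hmn : mval hn0 σ < n := mval_lt hn0
  refine ⟨?_, ?_, ?_⟩
  · rw [mem_Dof hn0]
    exact le_rfl
  · rw [mem_Dof hn0]
    have hs : σ ⟨0, by omega⟩ = ⟨a - 1, by omega⟩ :=
      Fin.ext (show (σ ⟨0, by omega⟩ : ℕ) = a - 1 by omega)
    have hsy : σ.symm ⟨a - 1, by omega⟩ = ⟨0, by omega⟩ :=
      (Equiv.symm_apply_eq σ).mpr hs.symm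
    rw [hsy]
    exact Nat.zero_le _
  · intro v hv
    rw [mem_Dof hn0] at hv
    have hpn : ((σ.symm v : Fin n) : ℕ) < n := (σ.symm v).2
    have hveq : σ ⟨((σ.symm v : Fin n) : ℕ), hpn⟩ = v := by
      rw [show (⟨((σ.symm v : Fin n) : ℕ), hpn⟩ : Fin n) = σ.symm v from Fin.ext rfl,
        Equiv.apply_symm_apply]
    rcases Nat.eq_zero_or_pos ((σ.symm v : Fin n) : ℕ) with he | hpos
    · have hsy : σ.symm v = ⟨0, by omega⟩ := Fin.ext he
      have h5 : v = σ ⟨0, by omega⟩ := (Equiv.symm_apply_eq σ).mp hsy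
      rw [h5]
      omega
    · have := dec_chain hn0 h0 (p := 0) (q := ((σ.symm v : Fin n) : ℕ)) hpos hv
      rw [hveq] at this
      have hvv : (v : ℕ) < (σ ⟨0, by omega⟩ : ℕ) := this
      omega

lemma vperm_P1 (hn : 2 < n) (ha₂ : 2 ≤ a) (han : a ≤ n - 1) {D : Finset (Fin n)}
    (hD : C1 hn ha₂ han D) :
    peakSet (vperm D) = ∅ ∧ (vperm D ⟨0, by omega⟩ : ℕ) + 1 = n ∧
      vperm D ⟨1, by omega⟩ < vperm D ⟨0, by omega⟩ ∧
      vperm D ⟨n - 2, by omega⟩ < vperm D ⟨n - 1, by omega⟩ ∧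
      (vperm D ⟨n - 1, by omega⟩ : ℕ) + 1 = a := by
  obtain ⟨h0, hna, hlt⟩ := hD
  have hn0 : 0 < n := by omega
  have hn1D : (⟨n - 1, by omega⟩ : Fin n) ∈ D := by
    by_contra hc
    have := hlt _ (Finset.mem_compl.mpr hc)
    simp at this; omega
  have hcard2 : 2 ≤ D.card := by
    rw [show (2 : ℕ) = 1 + 1 from rfl]
    exact Finset.one_lt_card.mpr ⟨_, h0, _, hn1D, by simp [Fin.ext_iff]; omega⟩
  have hcardn : D.card < n := by
    by_contra hc
    push_neg at hc
    have hle := Finset.card_le_univ D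
    simp only [Finset.card_univ, Fintype.card_fin] at hle
    have hDu : D = Finset.univ := Finset.eq_univ_of_card D (by rw [Fintype.card_fin]; omega)
    exact hna (hDu ▸ Finset.mem_univ _)
  refine ⟨vperm_peakSet D, ?_, ?_, ?_, ?_⟩
  · rw [vperm_zero_val D (by omega)]
    have hmax : D.max' (Finset.card_pos.mp (by omega : 0 < D.card)) = ⟨n - 1, by omega⟩ :=
      le_antisymm (Finset.max'_le _ _ _ (fun v _ => Fin.le_def.mpr (show (v : ℕ) ≤ n - 1 by have := v.2; omega)))
        (Finset.le_max' _ _ hn1D)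
    rw [hmax]
    simp; omega
  · exact vfun_desc (D := D) (i := ⟨0, by omega⟩) (j := ⟨1, by omega⟩)
      (by simp) (by simp; omega)
  · by_cases hc : D.card ≤ n - 2
    · exact vfun_asc (D := D) (i := ⟨n - 2, by omega⟩) (j := ⟨n - 1, by omega⟩)
        (by simp; omega) (by simp; omega)
    · have hcard : D.card = n - 1 := by omega
      have hpos : (⟨n - 2, by omega⟩ : Fin n) = ⟨D.card - 1, by omega⟩ :=
        Fin.ext (by simp; omega)
      rw [hpos, vperm_valley D hn0 h0]
      have hmem : vperm D ⟨n - 1, by omega⟩ ∈ Dᶜ :=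
        vfun_mem_right (by simp; omega)
      have hne0 : (vperm D ⟨n - 1, by omega⟩ : ℕ) ≠ 0 := by
        intro hzz
        have hh : vperm D ⟨n - 1, by omega⟩ = ⟨0, hn0⟩ := Fin.ext hzz
        rw [hh, Finset.mem_compl] at hmem
        exact hmem h0
      exact Nat.pos_of_ne_zero hne0
  · rw [vperm_last_val D hcardn hn0]
    have hmax : Dᶜ.max' (by rw [← Finset.card_pos, Finset.card_compl, Fintype.card_fin]; omega)
        = ⟨a - 1, by omega⟩ :=
      le_antisymm (Finset.max'_le _ _ _ (fun v hv => Fin.le_def.mpr (show (v : ℕ) ≤ a - 1 by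
          have := hlt v hv; omega)))
        (Finset.le_max' _ _ (Finset.mem_compl.mpr hna))
    rw [hmax]
    simp; omega

lemma vperm_P2 (hn : 2 < n) (ha₂ : 2 ≤ a) (han : a ≤ n - 1) {D : Finset (Fin n)}
    (hD : C2 hn ha₂ han D) :
    peakSet (vperm D) = ∅ ∧ (vperm D ⟨0, by omega⟩ : ℕ) + 1 = a ∧
      vperm D ⟨1, by omega⟩ < vperm D ⟨0, by omega⟩ ∧
      vperm D ⟨n - 2, by omega⟩ < vperm D ⟨n - 1, by omega⟩ ∧
      (vperm D ⟨n - 1, by omega⟩ : ℕ) + 1 = n := by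
  obtain ⟨h0, hma, hlt⟩ := hD
  have hn0 : 0 < n := by omega
  have hn1c : (⟨n - 1, by omega⟩ : Fin n) ∉ D := by
    intro hc
    have := hlt _ hc
    simp at this; omega
  have hcard2 : 2 ≤ D.card := by
    rw [show (2 : ℕ) = 1 + 1 from rfl]
    exact Finset.one_lt_card.mpr ⟨_, h0, _, hma, by simp [Fin.ext_iff]; omega⟩
  have hcardn : D.card < n := by
    by_contra hc
    push_neg at hc
    have hle := Finset.card_le_univ D
    simp only [Finset.card_univ, Fintype.card_fin] at hle
    have hDu : D = Finset.univ := Finset.eq_univ_of_card D (by rw [Fintype.card_fin]; omega)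
    exact hn1c (hDu ▸ Finset.mem_univ _)
  refine ⟨vperm_peakSet D, ?_, ?_, ?_, ?_⟩
  · rw [vperm_zero_val D (by omega)]
    have hmax : D.max' (Finset.card_pos.mp (by omega : 0 < D.card)) = ⟨a - 1, by omega⟩ :=
      le_antisymm (Finset.max'_le _ _ _ (fun v hv => Fin.le_def.mpr (show (v : ℕ) ≤ a - 1 by
          have := hlt v hv; omega)))
        (Finset.le_max' _ _ hma)
    rw [hmax]
    simp; omega
  · exact vfun_desc (D := D) (i := ⟨0, by omega⟩) (j := ⟨1, by omega⟩)
      (by simp) (by simp; omega)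
  · by_cases hc : D.card ≤ n - 2
    · exact vfun_asc (D := D) (i := ⟨n - 2, by omega⟩) (j := ⟨n - 1, by omega⟩)
        (by simp; omega) (by simp; omega)
    · have hcard : D.card = n - 1 := by omega
      have hpos : (⟨n - 2, by omega⟩ : Fin n) = ⟨D.card - 1, by omega⟩ :=
        Fin.ext (by simp; omega)
      rw [hpos, vperm_valley D hn0 h0]
      have hmem : vperm D ⟨n - 1, by omega⟩ ∈ Dᶜ :=
        vfun_mem_right (by simp; omega)
      have hne0 : (vperm D ⟨n - 1, by omega⟩ : ℕ) ≠ 0 := by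
        intro hzz
        have hh : vperm D ⟨n - 1, by omega⟩ = ⟨0, hn0⟩ := Fin.ext hzz
        rw [hh, Finset.mem_compl] at hmem
        exact hmem h0
      exact Nat.pos_of_ne_zero hne0
  · rw [vperm_last_val D hcardn hn0]
    have hmax : Dᶜ.max' (by rw [← Finset.card_pos, Finset.card_compl, Fintype.card_fin]; omega)
        = ⟨n - 1, by omega⟩ :=
      le_antisymm (Finset.max'_le _ _ _ (fun v _ => Fin.le_def.mpr (show (v : ℕ) ≤ n - 1 by have := v.2; omega)))
        (Finset.le_max' _ _ (Finset.mem_compl.mpr hn1c))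
    rw [hmax]
    simp; omega

end Main


section Equivs

variable {a : ℕ}

noncomputable def eqv1 (hn : 2 < n) (ha₂ : 2 ≤ a) (han : a ≤ n - 1) :
    {σ : Equiv.Perm (Fin n) // peakSet σ = ∅ ∧
        (σ ⟨0, by omega⟩ : ℕ) + 1 = n ∧ σ ⟨1, by omega⟩ < σ ⟨0, by omega⟩ ∧
        σ ⟨n - 2, by omega⟩ < σ ⟨n - 1, by omega⟩ ∧ (σ ⟨n - 1, by omega⟩ : ℕ) + 1 = a} ≃
      {D : Finset (Fin n) // C1 hn ha₂ han D} where
  toFun := fun σp => ⟨Dof (by omega) σp.1,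
    C1_of hn ha₂ han σp.2.1 σp.2.2.1 σp.2.2.2.2.2⟩
  invFun := fun Dp => ⟨vperm Dp.1, vperm_P1 hn ha₂ han Dp.2⟩
  left_inv := fun σp => Subtype.ext (sigma_eq_vperm (by omega) σp.2.1).symm
  right_inv := fun Dp => Subtype.ext (Dof_vperm Dp.1 (by omega) Dp.2.1)

noncomputable def eqv2 (hn : 2 < n) (ha₂ : 2 ≤ a) (han : a ≤ n - 1) :
    {σ : Equiv.Perm (Fin n) // peakSet σ = ∅ ∧
        (σ ⟨0, by omega⟩ : ℕ) + 1 = a ∧ σ ⟨1, by omega⟩ < σ ⟨0, by omega⟩ ∧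
        σ ⟨n - 2, by omega⟩ < σ ⟨n - 1, by omega⟩ ∧ (σ ⟨n - 1, by omega⟩ : ℕ) + 1 = n} ≃
      {D : Finset (Fin n) // C2 hn ha₂ han D} where
  toFun := fun σp => ⟨Dof (by omega) σp.1,
    C2_of hn ha₂ han σp.2.1 σp.2.2.1 σp.2.2.2.2.2⟩
  invFun := fun Dp => ⟨vperm Dp.1, vperm_P2 hn ha₂ han Dp.2⟩
  left_inv := fun σp => Subtype.ext (sigma_eq_vperm (by omega) σp.2.1).symm
  right_inv := fun Dp => Subtype.ext (Dof_vperm Dp.1 (by omega) Dp.2.1)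


abbrev fz (h : 0 < n) : Fin n := ⟨0, h⟩

abbrev fa (a : ℕ) (h : a - 1 < n) : Fin n := ⟨a - 1, h⟩

noncomputable def eqv3 (hn : 2 < n) (ha₂ : 2 ≤ a) (han : a ≤ n - 1) :
    {D : Finset (Fin n) // C1 hn ha₂ han D} ≃ {D : Finset (Fin n) // C2 hn ha₂ han D} where
  toFun := fun Dp => ⟨insert (fz (by omega)) Dp.1ᶜ, by
    obtain ⟨h0, hna, hlt⟩ := Dp.2
    refine ⟨Finset.mem_insert_self _ _,
      Finset.mem_insert_of_mem (Finset.mem_compl.mpr hna), ?_⟩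
    intro v hv
    rcases Finset.mem_insert.mp hv with he | hm
    · have hv0 : (v : ℕ) = 0 := congrArg Fin.val he
      omega
    · exact hlt v hm⟩
  invFun := fun Dp => ⟨(Dp.1.erase (fz (by omega)))ᶜ, by
    obtain ⟨h0, ha1, hlt⟩ := Dp.2
    refine ⟨?_, ?_, ?_⟩
    · rw [Finset.mem_compl]
      intro hc
      exact absurd rfl (Finset.mem_erase.mp hc).1
    · intro hc
      exact (Finset.mem_compl.mp hc)
        (Finset.mem_erase.mpr ⟨by simp [fz, Fin.ext_iff]; omega, ha1⟩)
    · intro v hv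
      rw [compl_compl] at hv
      exact hlt v (Finset.mem_of_mem_erase hv)⟩
  left_inv := fun Dp => Subtype.ext (by
    have h0c : (fz (by omega) : Fin n) ∉ (Dp.1)ᶜ := by
      rw [Finset.mem_compl, not_not]; exact Dp.2.1
    show ((insert (fz (by omega) : Fin n) Dp.1ᶜ).erase (fz (by omega)))ᶜ = Dp.1
    rw [Finset.erase_insert h0c, compl_compl])
  right_inv := fun Dp => Subtype.ext (by
    show insert (fz (by omega) : Fin n) ((Dp.1.erase (fz (by omega)))ᶜ)ᶜ = Dp.1
    rw [compl_compl, Finset.insert_erase Dp.2.1])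

noncomputable def eqv4 (hn : 2 < n) (ha₂ : 2 ≤ a) (han : a ≤ n - 1) :
    {D : Finset (Fin n) // C1 hn ha₂ han D} ≃
      {T : Finset (Fin n) //
        T ∈ (Finset.Ioo (⟨0, by omega⟩ : Fin n) ⟨a - 1, by omega⟩).powerset} where
  toFun := fun Dp => ⟨Dp.1ᶜ.erase (fa a (by omega)), by
    rw [Finset.mem_powerset]
    intro v hv
    obtain ⟨hne, hvc⟩ := Finset.mem_erase.mp hv
    obtain ⟨h0, hna, hlt⟩ := Dp.2
    have h1 := hlt v hvc
    rw [Finset.mem_Ioo]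
    constructor
    · have hv0 : v ≠ ⟨0, by omega⟩ := by
        intro he; rw [he] at hvc; exact (Finset.mem_compl.mp hvc) h0
      exact Fin.lt_def.mpr (Nat.pos_of_ne_zero (fun h => hv0 (Fin.ext h)))
    · refine Fin.lt_def.mpr (show (v : ℕ) < a - 1 from ?_)
      have hvne : (v : ℕ) ≠ a - 1 := fun h => hne (Fin.ext h)
      omega⟩
  invFun := fun Tp => ⟨(insert (fa a (by omega) : Fin n) Tp.1)ᶜ, by
    have hT := Finset.mem_powerset.mp Tp.2
    refine ⟨?_, ?_, ?_⟩
    · rw [Finset.mem_compl]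
      intro hc
      rcases Finset.mem_insert.mp hc with he | hm
      · have h2 : (0 : ℕ) = a - 1 := congrArg Fin.val he
        omega
      · have h2 := (Finset.mem_Ioo.mp (hT hm)).1
        have h3 : (0 : ℕ) < ((⟨0, by omega⟩ : Fin n) : ℕ) := h2
        simp at h3
    · intro hc
      exact (Finset.mem_compl.mp hc) (Finset.mem_insert_self _ _)
    · intro v hv
      rw [compl_compl] at hv
      rcases Finset.mem_insert.mp hv with he | hm
      · rw [he]; show a - 1 < a; omega
      · have h2 : (v : ℕ) < a - 1 := (Finset.mem_Ioo.mp (hT hm)).2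
        omega⟩
  left_inv := fun Dp => Subtype.ext (by
    show (insert (fa a (by omega) : Fin n) (Dp.1ᶜ.erase (fa a (by omega))))ᶜ = Dp.1
    rw [Finset.insert_erase (Finset.mem_compl.mpr Dp.2.2.1), compl_compl])
  right_inv := fun Tp => Subtype.ext (by
    show ((insert (fa a (by omega) : Fin n) Tp.1)ᶜ)ᶜ.erase (fa a (by omega)) = Tp.1
    rw [compl_compl, Finset.erase_insert (fun hc =>
      absurd ((Finset.mem_Ioo.mp (Finset.mem_powerset.mp Tp.2 hc)).2) (lt_irrefl _))])

lemma card_C1 (hn : 2 < n) (ha₂ : 2 ≤ a) (han : a ≤ n - 1) :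
    Nat.card {D : Finset (Fin n) // C1 hn ha₂ han D} = 2 ^ (a - 2) := by
  rw [Nat.card_congr (eqv4 hn ha₂ han)]
  rw [Nat.card_eq_finsetCard]
  rw [Finset.card_powerset, Fin.card_Ioo]
  congr 1

end Equivs

end IC

theorem int_count_one_part (n a : ℕ) (hn : 3 ≤ n) (ha₂ : 2 ≤ a) (han : a ≤ n - 1) :
    Nat.card {σ : Equiv.Perm (Fin n) // peakSet σ = ∅ ∧
        (σ ⟨0, by omega⟩ : ℕ) + 1 = n ∧ σ ⟨1, by omega⟩ < σ ⟨0, by omega⟩ ∧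
        σ ⟨n - 2, by omega⟩ < σ ⟨n - 1, by omega⟩ ∧ (σ ⟨n - 1, by omega⟩ : ℕ) + 1 = a}
      = 2 ^ (a - 2) ∧
    Nat.card {σ : Equiv.Perm (Fin n) // peakSet σ = ∅ ∧
        (σ ⟨0, by omega⟩ : ℕ) + 1 = a ∧ σ ⟨1, by omega⟩ < σ ⟨0, by omega⟩ ∧
        σ ⟨n - 2, by omega⟩ < σ ⟨n - 1, by omega⟩ ∧ (σ ⟨n - 1, by omega⟩ : ℕ) + 1 = n}
      = 2 ^ (a - 2) := by
  constructor
  · exact (Nat.card_congr (IC.eqv1 hn ha₂ han)).trans (IC.card_C1 hn ha₂ han)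
  · exact (Nat.card_congr (IC.eqv2 hn ha₂ han)).trans
      ((Nat.card_congr (IC.eqv3 hn ha₂ han).symm).trans (IC.card_C1 hn ha₂ han))
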